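/- The Apéry numbers b_n = \sum_{k=0}^n \binom{n}{k}^2 \binom{n+k}{k} satisfy the recurrence (n+1)^2 b_{n+1} - (11n^2+11n+3) b_n - n^2 b_{n-1} = 0 for all n \ge 1, together with b_0 = 1 and b_1 = 3. -/

import Mathlib

/-- The Apéry numbers `b n = ∑ k, (n choose k)^2 * ((n+k) choose k)`. -/
def aperyB (n : ℕ) : ℤ :=
  ∑ k ∈ Finset.range (n + 1), (n.choose k : ℤ) ^ 2 * ((n + k).choose k : ℤ)

namespace AperyBAux

/-- The summand, over `ℚ`. -/
def Bq (n k : ℕ) : ℚ := (n.choose k : ℚ) ^ 2 * ((n + k).choose k : ℚ)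

/-- The polynomial in the certificate. -/
def Pq (n : ℕ) (x : ℚ) : ℚ := x ^ 2 + (6 * n + 1) * x - (11 * n ^ 2 + 15 * n + 4)

/-- The telescoping certificate. -/
def Gq (n k : ℕ) : ℚ :=
  ((n + 1).choose k : ℚ) ^ 2 * ((n + k - 1).choose (k - 1) : ℚ) * (k : ℚ) ^ 2 * Pq n k
    / ((n : ℚ) + 1) ^ 2

lemma key0 (n : ℕ) :
    ((n : ℚ) + 1) ^ 2 * Bq (n + 1) 0 - (11 * (n : ℚ) ^ 2 + 11 * n + 3) * Bq n 0
      - (n : ℚ) ^ 2 * Bq (n - 1) 0 = Gq n 1 - Gq n 0 := by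
  have h5 : ((n : ℚ) + 1) ≠ 0 := by positivity
  simp only [Bq, Gq, Pq, Nat.choose_zero_right, Nat.choose_one_right, Nat.add_zero,
    Nat.cast_one, Nat.cast_zero, Nat.add_sub_cancel, Nat.cast_add, Nat.sub_self]
  field_simp
  ring

lemma keyTop (n : ℕ) (hn : 1 ≤ n) :
    ((n : ℚ) + 1) ^ 2 * Bq (n + 1) (n + 1)
      - (11 * (n : ℚ) ^ 2 + 11 * n + 3) * Bq n (n + 1)
      - (n : ℚ) ^ 2 * Bq (n - 1) (n + 1) = Gq n (n + 2) - Gq n (n + 1) := by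
  have h5 : ((n : ℚ) + 1) ≠ 0 := by positivity
  have hz1 : n.choose (n + 1) = 0 := Nat.choose_eq_zero_of_lt (by omega)
  have hz2 : (n - 1).choose (n + 1) = 0 := Nat.choose_eq_zero_of_lt (by omega)
  have hz3 : (n + 1).choose (n + 2) = 0 := Nat.choose_eq_zero_of_lt (by omega)
  have ha : n + (n + 1) - 1 = 2 * n := by omega
  have hb : n + 1 - 1 = n := by omega
  have hc : (n + 1) + (n + 1) = 2 * (n + 1) := by omega
  have hcb := Nat.succ_mul_centralBinom_succ n
  simp only [Nat.centralBinom] at hcb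
  have hcb' : ((n : ℚ) + 1) * ((2 * (n + 1)).choose (n + 1) : ℚ)
      = 2 * (2 * n + 1) * ((2 * n).choose n : ℚ) := by exact_mod_cast hcb
  simp only [Bq, Gq, Pq, hz1, hz2, hz3, ha, hb, hc, Nat.choose_self, Nat.cast_zero,
    Nat.cast_one, Nat.cast_add]
  field_simp
  linear_combination (((n : ℚ) + 1) ^ 3) * hcb'

lemma key (n k : ℕ) (hk1 : 1 ≤ k) (hkn : k ≤ n) :
    ((n : ℚ) + 1) ^ 2 * Bq (n + 1) k - (11 * (n : ℚ) ^ 2 + 11 * n + 3) * Bq n k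
      - (n : ℚ) ^ 2 * Bq (n - 1) k = Gq n (k + 1) - Gq n k := by
  have hn : 1 ≤ n := le_trans hk1 hkn
  have hnk1 : n + (k + 1) - 1 = n + k := by omega
  have hk1' : k + 1 - 1 = k := by omega
  have hnk2 : n + k - 1 + 1 = n + k := by omega
  have hks : k - 1 + 1 = k := by omega
  have hn1 : n - 1 + 1 = n := by omega
  have hn1k : n - 1 + k = n + k - 1 := by omega
  have hKpos : (1 : ℚ) ≤ (k : ℚ) := by exact_mod_cast hk1
  have hNK : (k : ℚ) ≤ (n : ℚ) := by exact_mod_cast hkn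
  have hNpos : (1 : ℚ) ≤ (n : ℚ) := by exact_mod_cast hn
  have hd1 : (n : ℚ) + 1 - k ≠ 0 := by intro h; nlinarith
  have hd2 : (n : ℚ) ≠ 0 := by intro h; nlinarith
  have hd3 : (n : ℚ) + k ≠ 0 := by intro h; nlinarith
  have hd4 : (k : ℚ) + 1 ≠ 0 := by intro h; nlinarith
  have hd5 : (n : ℚ) + 1 ≠ 0 := by intro h; nlinarith
  -- cast identities between neighbouring binomial coefficients
  have e1 : ((n + 1).choose k : ℚ) * ((n : ℚ) + 1 - k) = (n.choose k : ℚ) * ((n : ℚ) + 1) := by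
    have h := Nat.choose_mul_succ_eq n k
    have h' : (n.choose k : ℚ) * ((n : ℚ) + 1)
        = ((n + 1).choose k : ℚ) * ((n + 1 - k : ℕ) : ℚ) := by exact_mod_cast h
    rw [Nat.cast_sub (by omega : k ≤ n + 1)] at h'
    push_cast at h'
    linear_combination -h'
  have e2 : ((n - 1).choose k : ℚ) * (n : ℚ) = (n.choose k : ℚ) * ((n : ℚ) - k) := by
    have h := Nat.choose_mul_succ_eq (n - 1) k
    rw [hn1] at h
    have h' : ((n - 1).choose k : ℚ) * (n : ℚ)
        = (n.choose k : ℚ) * ((n - k : ℕ) : ℚ) := by exact_mod_cast h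
    rw [Nat.cast_sub hkn] at h'
    linear_combination h'
  have e3 : ((n + 1 + k).choose k : ℚ) * ((n : ℚ) + 1)
      = ((n + k).choose k : ℚ) * ((n : ℚ) + k + 1) := by
    have h := Nat.choose_mul_succ_eq (n + k) k
    have ha : n + k + 1 - k = n + 1 := by omega
    have hb : n + 1 + k = n + k + 1 := by omega
    rw [ha] at h
    rw [hb]
    have h' : ((n + k).choose k : ℚ) * ((n : ℚ) + k + 1)
        = ((n + k + 1).choose k : ℚ) * ((n : ℚ) + 1) := by exact_mod_cast h
    linear_combination -h'
  have e4 : ((n + k - 1).choose (k - 1) : ℚ) * ((n : ℚ) + k)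
      = ((n + k).choose k : ℚ) * (k : ℚ) := by
    have h := Nat.add_one_mul_choose_eq (n + k - 1) (k - 1)
    rw [hnk2, hks] at h
    have h' : ((n : ℚ) + k) * ((n + k - 1).choose (k - 1) : ℚ)
        = ((n + k).choose k : ℚ) * (k : ℚ) := by exact_mod_cast h
    linear_combination h'
  have e5 : ((n - 1 + k).choose k : ℚ) * ((n : ℚ) + k)
      = ((n + k).choose k : ℚ) * (n : ℚ) := by
    have h := Nat.choose_mul_succ_eq (n + k - 1) k
    rw [hnk2, Nat.add_sub_cancel] at h
    rw [hn1k]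
    have h' : ((n + k - 1).choose k : ℚ) * ((n : ℚ) + k)
        = ((n + k).choose k : ℚ) * (n : ℚ) := by exact_mod_cast h
    linear_combination h'
  have e6 : ((n + 1).choose (k + 1) : ℚ) * ((k : ℚ) + 1)
      = (n.choose k : ℚ) * ((n : ℚ) + 1) := by
    have h := Nat.add_one_mul_choose_eq n k
    have h' : ((n : ℚ) + 1) * (n.choose k : ℚ)
        = ((n + 1).choose (k + 1) : ℚ) * ((k : ℚ) + 1) := by exact_mod_cast h
    linear_combination -h'
  have f1 : ((n + 1).choose k : ℚ) = (n.choose k : ℚ) * ((n : ℚ) + 1) / ((n : ℚ) + 1 - k) := by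
    rw [eq_div_iff hd1]; linear_combination e1
  have f2 : ((n - 1).choose k : ℚ) = (n.choose k : ℚ) * ((n : ℚ) - k) / (n : ℚ) := by
    rw [eq_div_iff hd2]; linear_combination e2
  have f3 : ((n + 1 + k).choose k : ℚ)
      = ((n + k).choose k : ℚ) * ((n : ℚ) + k + 1) / ((n : ℚ) + 1) := by
    rw [eq_div_iff hd5]; linear_combination e3
  have f4 : ((n + k - 1).choose (k - 1) : ℚ)
      = ((n + k).choose k : ℚ) * (k : ℚ) / ((n : ℚ) + k) := by
    rw [eq_div_iff hd3]; linear_combination e4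
  have f5 : ((n - 1 + k).choose k : ℚ)
      = ((n + k).choose k : ℚ) * (n : ℚ) / ((n : ℚ) + k) := by
    rw [eq_div_iff hd3]; linear_combination e5
  have f6 : ((n + 1).choose (k + 1) : ℚ)
      = (n.choose k : ℚ) * ((n : ℚ) + 1) / ((k : ℚ) + 1) := by
    rw [eq_div_iff hd4]; linear_combination e6
  simp only [Bq, Gq, Pq, hnk1, hk1']
  rw [f1, f2, f3, f4, f5, f6]
  push_cast
  field_simp
  ring

lemma keyAll (n k : ℕ) (hn : 1 ≤ n) (hk : k < n + 2) :
    ((n : ℚ) + 1) ^ 2 * Bq (n + 1) k - (11 * (n : ℚ) ^ 2 + 11 * n + 3) * Bq n k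
      - (n : ℚ) ^ 2 * Bq (n - 1) k = Gq n (k + 1) - Gq n k := by
  rcases Nat.eq_zero_or_pos k with hk0 | hk1
  · subst hk0; exact key0 n
  · rcases eq_or_lt_of_le (Nat.succ_le_of_lt (by omega : k - 1 < n + 1)) with h | h
    · have : k = n + 1 := by omega
      subst this; exact keyTop n hn
    · exact key n k hk1 (by omega)

lemma gq_zero (n : ℕ) : Gq n 0 = 0 := by simp [Gq]

lemma gq_top (n : ℕ) : Gq n (n + 2) = 0 := by
  have : (n + 1).choose (n + 2) = 0 := Nat.choose_eq_zero_of_lt (by omega)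
  simp [Gq, this]

end AperyBAux

theorem apery_b_recurrence :
    aperyB 0 = 1 ∧ aperyB 1 = 3 ∧
      ∀ n : ℕ, 1 ≤ n →
        ((n : ℤ) + 1) ^ 2 * aperyB (n + 1) - (11 * (n : ℤ) ^ 2 + 11 * n + 3) * aperyB n
          - (n : ℤ) ^ 2 * aperyB (n - 1) = 0 := by
  have hcast : ∀ N : ℕ, ((aperyB N : ℤ) : ℚ) = ∑ k ∈ Finset.range (N + 1), AperyBAux.Bq N k := by
    intro N
    simp only [aperyB, AperyBAux.Bq]
    push_cast
    rfl
  refine ⟨by simp [aperyB], by simp [aperyB, Finset.sum_range_succ], ?_⟩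
  intro n hn
  have key : (((n : ℤ) + 1) ^ 2 * aperyB (n + 1) - (11 * (n : ℤ) ^ 2 + 11 * n + 3) * aperyB n
      - (n : ℤ) ^ 2 * aperyB (n - 1) : ℤ) = (0 : ℤ) := by
    have hQ : ((((n : ℤ) + 1) ^ 2 * aperyB (n + 1)
        - (11 * (n : ℤ) ^ 2 + 11 * n + 3) * aperyB n
        - (n : ℤ) ^ 2 * aperyB (n - 1) : ℤ) : ℚ) = 0 := by
      push_cast
      rw [hcast, hcast, hcast]
      -- extend all sums to `range (n + 2)`
      have hb1 : ∑ k ∈ Finset.range (n + 1), AperyBAux.Bq n k = ∑ k ∈ Finset.range (n + 2), AperyBAux.Bq n k := by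
        refine Finset.sum_subset (Finset.range_subset_range.mpr (by omega)) fun x _ hx => ?_
        have hx' : n < x := by simpa using hx
        have : n.choose x = 0 := Nat.choose_eq_zero_of_lt hx'
        simp [AperyBAux.Bq, this]
      have hb2 : ∑ k ∈ Finset.range (n - 1 + 1), AperyBAux.Bq (n - 1) k
          = ∑ k ∈ Finset.range (n + 2), AperyBAux.Bq (n - 1) k := by
        refine Finset.sum_subset (Finset.range_subset_range.mpr (by omega)) fun x _ hx => ?_
        have hx' : n - 1 < x := by simp at hx; omega
        have : (n - 1).choose x = 0 := Nat.choose_eq_zero_of_lt hx'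
        simp [AperyBAux.Bq, this]
      rw [hb1, hb2, Finset.mul_sum, Finset.mul_sum, Finset.mul_sum,
        ← Finset.sum_sub_distrib, ← Finset.sum_sub_distrib]
      rw [Finset.sum_congr rfl fun k hk =>
        AperyBAux.keyAll n k hn (Finset.mem_range.mp hk)]
      rw [Finset.sum_range_sub (f := AperyBAux.Gq n) (n + 2), AperyBAux.gq_zero, AperyBAux.gq_top]
      ring
    exact_mod_cast hQ
  exact key
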